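/- arXiv:1803.07668 — 2 statements merged into one kernel-verified Lean document; each statement's English description precedes it below -/
import Mathlib

section
/- There is an absolute constant C > 0 such that for every d > 0, every k ∈ ℕ, every x ∈ ℝ and every t > 0, the function g_d(x,t) = (4π(t+d))^{−1/2} e^{−x²/(4(t+d))} satisfies |∂_t^k g_d(x,t)| ≤ C · 2^{−k} · t^{−(k+1/2)} · √((2k)!). -/
open MeasureTheory Real

noncomputable section

/-- `g_d(x,t) = (4π(t+d))^{-1/2} e^{-x²/(4(t+d))}`. -/
def gd (d x t : ℝ) : ℝ :=
  (Real.sqrt (4 * π * (t + d)))⁻¹ * Real.exp (-(x^2 / (4 * (t + d))))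

/-- `F_d(x,t) = (4πt)^{-1/2} g_d(x,t)`. -/
def Fd (d x t : ℝ) : ℝ := (Real.sqrt (4 * π * t))⁻¹ * gd d x t

namespace Stmt14Aux

open Metric

lemma int_pow_gauss (n : ℕ) {b : ℝ} (hb : 0 < b) :
    Integrable (fun ξ : ℝ => ξ ^ n * Real.exp (-b * ξ ^ 2)) := by
  have := integrable_rpow_mul_exp_neg_mul_sq hb
    (s := (n : ℝ)) (lt_of_lt_of_le neg_one_lt_zero (Nat.cast_nonneg n))
  simpa [Real.rpow_natCast] using this

open Complex in
lemma base_formula (x : ℝ) {s : ℝ} (hs : 0 < s) :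
    (Real.sqrt (4 * π * s))⁻¹ * Real.exp (-(x ^ 2 / (4 * s)))
      = (2 * π)⁻¹ * ∫ ξ : ℝ, Real.exp (-s * ξ ^ 2) * Real.cos (x * ξ) := by
  have hb : (0 : ℝ) < (s : ℂ).re := by simpa using hs
  have h := fourierIntegral_gaussian (b := (s : ℂ)) hb (x : ℂ)
  have hint : Integrable (fun ξ : ℝ => cexp (I * x * ξ) * cexp (-(s:ℂ) * ξ ^ 2)) := by
    have h2 := integrable_cexp_quadratic (b := (s : ℂ)) hb (I * x) 0
    refine h2.congr (Filter.Eventually.of_forall fun ξ => ?_)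
    simp only [add_zero, Complex.exp_add]
    ring
  have hre : ∀ ξ : ℝ, (cexp (I * x * ξ) * cexp (-(s:ℂ) * ξ ^ 2)).re
      = Real.exp (-s * ξ ^ 2) * Real.cos (x * ξ) := by
    intro ξ
    have hz : (I * (x:ℂ) * ξ + -(s:ℂ) * ξ ^ 2)
        = ((-(s * ξ ^ 2) : ℝ) : ℂ) + ((x * ξ : ℝ) : ℂ) * I := by push_cast; ring
    rw [← Complex.exp_add, hz, Complex.exp_re]
    simp only [Complex.add_re, Complex.add_im, Complex.ofReal_re, Complex.ofReal_im,
      Complex.mul_I_re, Complex.mul_I_im]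
    norm_num
  have hL : ∫ ξ : ℝ, Real.exp (-s * ξ ^ 2) * Real.cos (x * ξ)
      = ((π / s : ℂ) ^ (1 / 2 : ℂ) * cexp (-(x:ℂ) ^ 2 / (4 * s))).re := by
    rw [← h, ← RCLike.re_to_complex, ← integral_re hint]
    refine integral_congr_ae (Filter.Eventually.of_forall fun ξ => ?_)
    exact (hre ξ).symm
  rw [hL]
  have h2 : ((π : ℂ) / s) = ((π / s : ℝ) : ℂ) := by push_cast; ring
  have h1 : ((π : ℂ) / s) ^ (1 / 2 : ℂ) = ((Real.sqrt (π / s) : ℝ) : ℂ) := by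
    rw [Real.sqrt_eq_rpow, h2, Complex.ofReal_cpow (by positivity)]
    norm_num
  have h3 : cexp (-(x:ℂ) ^ 2 / (4 * s)) = ((Real.exp (-(x ^ 2 / (4 * s))) : ℝ) : ℂ) := by
    rw [Complex.ofReal_exp]
    congr 1
    push_cast
    ring
  rw [h1, h3, ← Complex.ofReal_mul, Complex.ofReal_re]
  have hπ : Real.sqrt π ^ 2 = π := Real.sq_sqrt Real.pi_pos.le
  have hπ0 : (0:ℝ) < Real.sqrt π := Real.sqrt_pos.mpr Real.pi_pos
  have hs0 : (0:ℝ) < Real.sqrt s := Real.sqrt_pos.mpr hs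
  have hs2 : Real.sqrt s ^ 2 = s := Real.sq_sqrt hs.le
  have e1 : Real.sqrt (4 * π * s) = 2 * Real.sqrt π * Real.sqrt s := by
    rw [show (4 : ℝ) * π * s = (2 * Real.sqrt π * Real.sqrt s) ^ 2 by nlinarith,
      Real.sqrt_sq (by positivity)]
  have e2 : Real.sqrt (π / s) = Real.sqrt π / Real.sqrt s := by
    rw [show π / s = (Real.sqrt π / Real.sqrt s) ^ 2 by rw [div_pow, hπ, hs2],
      Real.sqrt_sq (by positivity)]
  rw [e1, e2]
  rw [show (2 * Real.sqrt π * Real.sqrt s)⁻¹ = (2 * π)⁻¹ * (Real.sqrt π / Real.sqrt s) by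
    field_simp
    nlinarith]
  ring

lemma cont_aux (x : ℝ) (k : ℕ) (s : ℝ) :
    Continuous (fun ξ : ℝ => (-(ξ ^ 2)) ^ k * Real.exp (-s * ξ ^ 2) * Real.cos (x * ξ)) := by
  fun_prop

lemma norm_aux (x : ℝ) (k : ℕ) (s ξ : ℝ) :
    ‖(-(ξ ^ 2)) ^ k * Real.exp (-s * ξ ^ 2) * Real.cos (x * ξ)‖
      ≤ ξ ^ (2 * k) * Real.exp (-s * ξ ^ 2) := by
  have h1 : |(-(ξ ^ 2)) ^ k| = ξ ^ (2 * k) := by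
    rw [abs_pow, abs_neg, abs_of_nonneg (sq_nonneg ξ), pow_mul]
  rw [Real.norm_eq_abs, abs_mul, abs_mul, h1, abs_of_nonneg (Real.exp_pos _).le]
  have hnn : (0:ℝ) ≤ ξ ^ (2*k) * Real.exp (-s*ξ^2) := by
    rw [pow_mul]; positivity
  calc ξ ^ (2*k) * Real.exp (-s*ξ^2) * |Real.cos (x*ξ)|
      ≤ ξ ^ (2*k) * Real.exp (-s*ξ^2) * 1 :=
        mul_le_mul_of_nonneg_left (abs_cos_le_one _) hnn
    _ = ξ ^ (2*k) * Real.exp (-s*ξ^2) := mul_one _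

lemma exp_mono_aux {s s' ξ : ℝ} (h : s ≤ s') : Real.exp (-s' * ξ ^ 2) ≤ Real.exp (-s * ξ ^ 2) := by
  apply Real.exp_le_exp.mpr
  nlinarith [sq_nonneg ξ]

lemma integrable_F (x : ℝ) (k : ℕ) {s : ℝ} (hs : 0 < s) :
    Integrable (fun ξ : ℝ => (-(ξ ^ 2)) ^ k * Real.exp (-s * ξ ^ 2) * Real.cos (x * ξ)) := by
  refine (int_pow_gauss (2 * k) hs).mono' ((cont_aux x k s).aestronglyMeasurable) ?_
  exact Filter.Eventually.of_forall fun ξ => norm_aux x k s ξ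

lemma formula (x : ℝ) : ∀ (k : ℕ) {s : ℝ}, 0 < s →
    iteratedDeriv k (fun s' => (Real.sqrt (4 * π * s'))⁻¹ * Real.exp (-(x ^ 2 / (4 * s')))) s
      = (2 * π)⁻¹ * ∫ ξ : ℝ, (-(ξ ^ 2)) ^ k * Real.exp (-s * ξ ^ 2) * Real.cos (x * ξ) := by
  intro k
  induction k with
  | zero =>
    intro s hs
    rw [iteratedDeriv_zero]
    simpa using base_formula x hs
  | succ k ih =>
    intro s hs
    rw [iteratedDeriv_succ]
    have hEq : (iteratedDeriv k
        (fun s' => (Real.sqrt (4 * π * s'))⁻¹ * Real.exp (-(x ^ 2 / (4 * s')))))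
        =ᶠ[nhds s] (fun s' => (2 * π)⁻¹ *
          ∫ ξ : ℝ, (-(ξ ^ 2)) ^ k * Real.exp (-s' * ξ ^ 2) * Real.cos (x * ξ)) := by
      filter_upwards [Ioi_mem_nhds hs] with y hy
      exact ih hy
    rw [hEq.deriv_eq]
    have key : HasDerivAt
        (fun s' => ∫ ξ : ℝ, (-(ξ ^ 2)) ^ k * Real.exp (-s' * ξ ^ 2) * Real.cos (x * ξ))
        (∫ ξ : ℝ, (-(ξ ^ 2)) ^ (k+1) * Real.exp (-s * ξ ^ 2) * Real.cos (x * ξ)) s := by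
      have := hasDerivAt_integral_of_dominated_loc_of_deriv_le
        (F := fun s' (ξ : ℝ) => (-(ξ ^ 2)) ^ k * Real.exp (-s' * ξ ^ 2) * Real.cos (x * ξ))
        (F' := fun s' (ξ : ℝ) => (-(ξ ^ 2)) ^ (k+1) * Real.exp (-s' * ξ ^ 2) * Real.cos (x * ξ))
        (x₀ := s) (bound := fun ξ => ξ ^ (2 * (k+1)) * Real.exp (-(s/2) * ξ ^ 2))
        (ball_mem_nhds s (half_pos hs))
        (Filter.Eventually.of_forall fun s' => (cont_aux x k s').aestronglyMeasurable)
        (integrable_F x k hs)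
        ((cont_aux x (k+1) s).aestronglyMeasurable)
        ?_ (int_pow_gauss (2 * (k+1)) (half_pos hs)) ?_
      · exact this.2
      · refine Filter.Eventually.of_forall fun ξ => fun s' hs' => ?_
        have h1 : s / 2 ≤ s' := by
          rw [mem_ball, Real.dist_eq] at hs'
          have := abs_lt.mp hs'
          linarith [this.1]
        calc ‖(-(ξ ^ 2)) ^ (k+1) * Real.exp (-s' * ξ ^ 2) * Real.cos (x * ξ)‖
            ≤ ξ ^ (2 * (k+1)) * Real.exp (-s' * ξ ^ 2) := norm_aux x (k+1) s' ξ
          _ ≤ ξ ^ (2 * (k+1)) * Real.exp (-(s/2) * ξ ^ 2) := by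
              have hnn : (0:ℝ) ≤ ξ ^ (2*(k+1)) := by rw [pow_mul]; positivity
              exact mul_le_mul_of_nonneg_left (exp_mono_aux h1) hnn
      · refine Filter.Eventually.of_forall fun ξ => fun s' _ => ?_
        have h1 : HasDerivAt (fun u : ℝ => Real.exp (-u * ξ ^ 2))
            (-(ξ ^ 2) * Real.exp (-s' * ξ ^ 2)) s' := by
          have h2 : HasDerivAt (fun u : ℝ => -u * ξ ^ 2) (-(ξ ^ 2)) s' := by
            simpa using ((hasDerivAt_id s').neg.mul_const (ξ ^ 2))
          simpa [mul_comm] using h2.exp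
        have := (h1.const_mul ((-(ξ ^ 2)) ^ k)).mul_const (Real.cos (x * ξ))
        exact this.congr_deriv (by ring)
    rw [(key.const_mul ((2 * π)⁻¹)).deriv]

lemma moment (k : ℕ) {s : ℝ} (hs : 0 < s) :
    ∫ ξ : ℝ, ξ ^ (2 * k) * Real.exp (-s * ξ ^ 2)
      = Real.Gamma ((k : ℝ) + 1/2) * s ^ (-((k : ℝ) + 1/2)) := by
  have h1 : ∫ ξ : ℝ, ξ ^ (2 * k) * Real.exp (-s * ξ ^ 2)
      = 2 * ∫ ξ in Set.Ioi (0:ℝ), ξ ^ (2 * k) * Real.exp (-s * ξ ^ 2) := by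
    rw [← integral_comp_abs (f := fun ξ => ξ ^ (2 * k) * Real.exp (-s * ξ ^ 2))]
    refine integral_congr_ae (Filter.Eventually.of_forall fun ξ => ?_)
    simp only [pow_mul, sq_abs]
  have h2 : ∫ ξ in Set.Ioi (0:ℝ), ξ ^ (2 * k) * Real.exp (-s * ξ ^ 2)
      = ∫ ξ in Set.Ioi (0:ℝ), ξ ^ ((2 * k : ℕ) : ℝ) * Real.exp (-s * ξ ^ ((2:ℕ):ℝ)) := by
    refine setIntegral_congr_fun measurableSet_Ioi (fun ξ _ => ?_)
    rw [Real.rpow_natCast, Real.rpow_natCast]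
  rw [h1, h2]
  rw [integral_rpow_mul_exp_neg_mul_rpow (by norm_num)
    (lt_of_lt_of_le neg_one_lt_zero (by positivity)) hs]
  rw [show (-(((2 * k : ℕ) : ℝ) + 1) / ((2:ℕ):ℝ)) = -((k:ℝ) + 1/2) by push_cast; ring,
    show ((((2 * k : ℕ) : ℝ) + 1) / ((2:ℕ):ℝ)) = (k:ℝ) + 1/2 by push_cast; ring]
  ring

lemma gamma_le : ∀ k : ℕ, Real.Gamma ((k : ℝ) + 1/2)
    ≤ Real.sqrt π * (1/2)^k * Real.sqrt ((2 * k).factorial) := by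
  intro k
  induction k with
  | zero => norm_num [Real.Gamma_one_half_eq]
  | succ k ih =>
    have hne : ((k : ℝ) + 1/2) ≠ 0 := by positivity
    have hstep : Real.Gamma (((k+1 : ℕ) : ℝ) + 1/2) = ((k:ℝ) + 1/2) * Real.Gamma ((k:ℝ) + 1/2) := by
      rw [show (((k+1 : ℕ) : ℝ) + 1/2) = ((k:ℝ) + 1/2) + 1 by push_cast; ring,
        Real.Gamma_add_one hne]
    rw [hstep]
    have h1 : ((k:ℝ) + 1/2) * Real.Gamma ((k:ℝ) + 1/2)
        ≤ ((k:ℝ) + 1/2) * (Real.sqrt π * (1/2)^k * Real.sqrt ((2 * k).factorial)) :=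
      mul_le_mul_of_nonneg_left ih (by positivity)
    refine h1.trans ?_
    have hfac : ((2 * (k+1)).factorial : ℝ)
        = ((2*k+2) * (2*k+1) : ℕ) * ((2 * k).factorial : ℝ) := by
      rw [show 2 * (k+1) = (2*k+1)+1 by ring, Nat.factorial_succ, Nat.factorial_succ]
      push_cast; ring
    have hsq : Real.sqrt ((2 * (k+1)).factorial)
        = Real.sqrt (((2*k+2) * (2*k+1) : ℕ)) * Real.sqrt ((2 * k).factorial) := by
      rw [hfac, Real.sqrt_mul (by positivity)]
    rw [hsq]
    set A : ℝ := (((2*k+2) * (2*k+1) : ℕ) : ℝ) with hA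
    have hkey : (2*(k:ℝ)+1) ≤ Real.sqrt A := by
      have h3 : ((2*(k:ℝ)+1))^2 ≤ A := by rw [hA]; push_cast; nlinarith
      have := Real.sqrt_le_sqrt h3
      rwa [Real.sqrt_sq (by positivity)] at this
    have hs1 : (0:ℝ) ≤ Real.sqrt ((2*k).factorial) := Real.sqrt_nonneg _
    have hs2 : (0:ℝ) ≤ Real.sqrt π := Real.sqrt_nonneg _
    have h2 : (2*(k:ℝ)+1) * Real.sqrt ((2 * k).factorial)
        ≤ Real.sqrt A * Real.sqrt ((2 * k).factorial) :=
      mul_le_mul_of_nonneg_right hkey hs1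
    calc ((k:ℝ) + 1/2) * (Real.sqrt π * (1/2)^k * Real.sqrt ((2 * k).factorial))
        = (Real.sqrt π * (1/2)^k * (1/2)) * ((2*(k:ℝ)+1) * Real.sqrt ((2 * k).factorial)) := by
          ring
      _ ≤ (Real.sqrt π * (1/2)^k * (1/2)) * (Real.sqrt A * Real.sqrt ((2 * k).factorial)) :=
          mul_le_mul_of_nonneg_left h2 (by positivity)
      _ = Real.sqrt π * (1/2)^(k+1) * (Real.sqrt A * Real.sqrt ((2 * k).factorial)) := by ring

end Stmt14Aux

open Stmt14Aux in
/-- Cramer-inequality bound on the time derivatives of `g_d`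
(equation (3.27) of the paper). -/
theorem stmt14 :
    ∃ C > 0, ∀ d : ℝ, 0 < d → ∀ k : ℕ, ∀ x : ℝ, ∀ t : ℝ, 0 < t →
      |iteratedDeriv k (fun t' => gd d x t') t| ≤
        C * ((1:ℝ)/2)^k * t ^ (-((k:ℝ) + 1/2)) *
          Real.sqrt ((2 * k).factorial) := by
  refine ⟨1, one_pos, fun d hd k x t ht => ?_⟩
  have hs : 0 < t + d := by linarith
  have hshift : (fun t' => gd d x t')
      = (fun z => (fun u => (Real.sqrt (4 * π * u))⁻¹ * Real.exp (-(x ^ 2 / (4 * u)))) (z + d)) :=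
    rfl
  have h2 : iteratedDeriv k
      (fun z => (fun u => (Real.sqrt (4 * π * u))⁻¹ * Real.exp (-(x ^ 2 / (4 * u)))) (z + d)) t
      = iteratedDeriv k (fun u => (Real.sqrt (4 * π * u))⁻¹ * Real.exp (-(x ^ 2 / (4 * u))))
        (t + d) :=
    congrFun (iteratedDeriv_comp_add_const k (fun u => (Real.sqrt (4 * π * u))⁻¹ * Real.exp (-(x ^ 2 / (4 * u)))) d) t
  rw [hshift, h2, formula x k hs]
  have hb1 : |∫ ξ : ℝ, (-(ξ ^ 2)) ^ k * Real.exp (-(t+d) * ξ ^ 2) * Real.cos (x * ξ)|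
      ≤ ∫ ξ : ℝ, ξ ^ (2 * k) * Real.exp (-(t+d) * ξ ^ 2) := by
    rw [← Real.norm_eq_abs]
    exact norm_integral_le_of_norm_le (int_pow_gauss (2 * k) hs)
      (Filter.Eventually.of_forall fun ξ => norm_aux x k (t+d) ξ)
  have hmom := moment k hs
  have hrpow_nonneg : (0:ℝ) ≤ (t+d) ^ (-((k:ℝ) + 1/2)) := Real.rpow_nonneg hs.le _
  have hB : (t+d) ^ (-((k:ℝ) + 1/2)) ≤ t ^ (-((k:ℝ) + 1/2)) :=
    Real.rpow_le_rpow_of_nonpos ht (by linarith) (by positivity |> neg_nonpos.mpr)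
  have hA : (2 * π)⁻¹ * Real.sqrt π ≤ 1 := by
    have h1 : Real.sqrt π ^ 2 = π := Real.sq_sqrt Real.pi_pos.le
    have h2 : (0:ℝ) ≤ Real.sqrt π := Real.sqrt_nonneg _
    rw [inv_mul_le_iff₀ (by positivity)]
    nlinarith [Real.pi_gt_three]
  have hfacnn : (0:ℝ) ≤ Real.sqrt ((2 * k).factorial) := Real.sqrt_nonneg _
  have hgam := gamma_le k
  calc |(2 * π)⁻¹ * ∫ ξ : ℝ, (-(ξ ^ 2)) ^ k * Real.exp (-(t+d) * ξ ^ 2) * Real.cos (x * ξ)|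
      = (2 * π)⁻¹ * |∫ ξ : ℝ, (-(ξ ^ 2)) ^ k * Real.exp (-(t+d) * ξ ^ 2) * Real.cos (x * ξ)| := by
        rw [abs_mul, abs_of_nonneg (by positivity)]
    _ ≤ (2 * π)⁻¹ * (Real.Gamma ((k : ℝ) + 1/2) * (t+d) ^ (-((k:ℝ) + 1/2))) := by
        rw [← hmom]
        exact mul_le_mul_of_nonneg_left hb1 (by positivity)
    _ ≤ (2 * π)⁻¹ * ((Real.sqrt π * (1/2)^k * Real.sqrt ((2 * k).factorial))
          * (t+d) ^ (-((k:ℝ) + 1/2))) := by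
        refine mul_le_mul_of_nonneg_left ?_ (by positivity)
        exact mul_le_mul_of_nonneg_right hgam hrpow_nonneg
    _ = ((2 * π)⁻¹ * Real.sqrt π) * ((1/2)^k * Real.sqrt ((2 * k).factorial)
          * (t+d) ^ (-((k:ℝ) + 1/2))) := by ring
    _ ≤ 1 * ((1/2)^k * Real.sqrt ((2 * k).factorial) * t ^ (-((k:ℝ) + 1/2))) := by
        refine mul_le_mul hA ?_ (by positivity) zero_le_one
        exact mul_le_mul_of_nonneg_left hB (by positivity)
    _ = 1 * ((1:ℝ)/2)^k * t ^ (-((k:ℝ) + 1/2)) * Real.sqrt ((2 * k).factorial) := by ring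
end
end

section
/- There is an absolute constant C > 0 such that for every d > 0, every n ≥ 1, every x ∈ ℝ and every t > 0, the function F_d(x,t) = (4πt)^{−1/2} · (4π(t+d))^{−1/2} · e^{−x²/(4(t+d))} satisfies |∂_t^{2n} F_d(x,t)| ≤ C · n^{1/4} · (2n)! · t^{−(2n+1)}. -/
open MeasureTheory Real

noncomputable section

namespace Stmt15Aux

open Filter Set

lemma integrable_pow_gauss (k : ℕ) {b : ℝ} (hb : 0 < b) :
    Integrable fun ξ : ℝ => ξ ^ k * Real.exp (-b * ξ ^ 2) := by
  have h : (-1 : ℝ) < (k : ℝ) :=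
    lt_of_lt_of_le (by norm_num) (Nat.cast_nonneg k)
  simpa [Real.rpow_natCast] using integrable_rpow_mul_exp_neg_mul_sq hb h

lemma integrable_sq_pow_gauss (j : ℕ) {b : ℝ} (hb : 0 < b) :
    Integrable fun ξ : ℝ => (ξ ^ 2) ^ j * Real.exp (-b * ξ ^ 2) := by
  simpa [← pow_mul] using integrable_pow_gauss (2 * j) hb

variable (w : ℝ → ℝ)

def Kf (j : ℕ) (s : ℝ) : ℝ := ∫ ξ : ℝ, (ξ ^ 2) ^ j * w ξ * Real.exp (-s * ξ ^ 2)

lemma integrable_Kf (hw : Continuous w) (hwb : ∀ ξ, |w ξ| ≤ 1) (j : ℕ) {b : ℝ} (hb : 0 < b) :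
    Integrable fun ξ : ℝ => (ξ ^ 2) ^ j * w ξ * Real.exp (-b * ξ ^ 2) := by
  apply (integrable_sq_pow_gauss j hb).mono'
  · apply Continuous.aestronglyMeasurable; fun_prop
  · filter_upwards with ξ
    have h1 : 0 ≤ (ξ ^ 2) ^ j := pow_nonneg (sq_nonneg _) _
    have h2 : 0 ≤ Real.exp (-b * ξ ^ 2) := (Real.exp_pos _).le
    rw [Real.norm_eq_abs, abs_mul, abs_mul, abs_of_nonneg h1, abs_of_nonneg h2]
    calc (ξ ^ 2) ^ j * |w ξ| * Real.exp (-b * ξ ^ 2)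
        ≤ (ξ ^ 2) ^ j * 1 * Real.exp (-b * ξ ^ 2) := by gcongr; exact hwb ξ
      _ = (ξ ^ 2) ^ j * Real.exp (-b * ξ ^ 2) := by ring

lemma hasDerivAt_Kf (hw : Continuous w) (hwb : ∀ ξ, |w ξ| ≤ 1) (j : ℕ) {s : ℝ} (hs : 0 < s) :
    HasDerivAt (Kf w j) (-(Kf w (j + 1) s)) s := by
  have key := hasDerivAt_integral_of_dominated_loc_of_deriv_le (μ := volume)
      (F := fun s' ξ => (ξ ^ 2) ^ j * w ξ * Real.exp (-s' * ξ ^ 2))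
      (F' := fun s' (ξ : ℝ) => (ξ ^ 2) ^ j * w ξ * (Real.exp (-s' * ξ ^ 2) * -(ξ ^ 2)))
      (x₀ := s) (bound := fun ξ : ℝ => (ξ ^ 2) ^ (j + 1) * Real.exp (-(s / 2) * ξ ^ 2))
      (Metric.ball_mem_nhds s (half_pos hs)) ?_ (integrable_Kf w hw hwb j hs) ?_ ?_
      (integrable_sq_pow_gauss (j + 1) (half_pos hs)) ?_
  · have h2 := key.2
    have he : (∫ ξ : ℝ, (ξ ^ 2) ^ j * w ξ * (Real.exp (-s * ξ ^ 2) * -(ξ ^ 2)))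
        = -(Kf w (j + 1) s) := by
      rw [Kf, ← integral_neg]
      congr 1; funext ξ; ring
    rw [he] at h2
    exact h2
  · filter_upwards with s'
    apply Continuous.aestronglyMeasurable; fun_prop
  · apply Continuous.aestronglyMeasurable; fun_prop
  · filter_upwards with ξ
    intro s' hs'
    have hs2 : s / 2 ≤ s' := by
      rw [Metric.mem_ball, Real.dist_eq, abs_sub_lt_iff] at hs'
      linarith [hs'.2]
    have h1 : 0 ≤ (ξ ^ 2) ^ j := pow_nonneg (sq_nonneg _) _
    have hexp : Real.exp (-s' * ξ ^ 2) ≤ Real.exp (-(s / 2) * ξ ^ 2) := by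
      apply Real.exp_le_exp.2
      nlinarith [sq_nonneg ξ]
    have h2 : ‖(ξ ^ 2) ^ j * w ξ * (Real.exp (-s' * ξ ^ 2) * -(ξ ^ 2))‖
        = (ξ ^ 2) ^ j * |w ξ| * (Real.exp (-s' * ξ ^ 2) * ξ ^ 2) := by
      rw [Real.norm_eq_abs, abs_mul, abs_mul, abs_mul, abs_neg, abs_of_nonneg h1,
        abs_of_nonneg (Real.exp_pos _).le, abs_of_nonneg (sq_nonneg ξ)]
    rw [h2]
    calc (ξ ^ 2) ^ j * |w ξ| * (Real.exp (-s' * ξ ^ 2) * ξ ^ 2)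
        ≤ (ξ ^ 2) ^ j * 1 * (Real.exp (-(s / 2) * ξ ^ 2) * ξ ^ 2) := by
          gcongr
          exact hwb ξ
      _ = (ξ ^ 2) ^ (j + 1) * Real.exp (-(s / 2) * ξ ^ 2) := by ring
  · filter_upwards with ξ
    intro s' _
    have h1 : HasDerivAt (fun σ : ℝ => -σ * ξ ^ 2) (-(ξ ^ 2)) s' := by
      simpa using ((hasDerivAt_id s').neg.mul_const (ξ ^ 2))
    exact (h1.exp).const_mul _


/-! ### Gaussian moments -/

def Mf (j : ℕ) (s : ℝ) : ℝ := ∫ ξ : ℝ, (ξ ^ 2) ^ j * Real.exp (-s * ξ ^ 2)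

lemma Kf_one (j : ℕ) : Kf (fun _ => 1) j = Mf j := by
  funext s; unfold Kf Mf; congr 1; funext ξ; ring

lemma hasDerivAt_Mf (j : ℕ) {s : ℝ} (hs : 0 < s) :
    HasDerivAt (Mf j) (-(Mf (j + 1) s)) s := by
  have := hasDerivAt_Kf (fun _ => 1) continuous_const (fun ξ => by norm_num) j hs
  rwa [Kf_one, Kf_one] at this

def mc (j : ℕ) : ℝ := Real.sqrt π * (2 * j).factorial / (4 ^ j * j.factorial)

lemma mc_succ (j : ℕ) : mc (j + 1) = mc j * ((j : ℝ) + 1 / 2) := by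
  have h1 : 2 * (j + 1) = (2 * j + 1) + 1 := by ring
  have hf1 : (0:ℝ) < (j.factorial : ℝ) := by exact_mod_cast j.factorial_pos
  have hf2 : (0:ℝ) < ((2*j).factorial : ℝ) := by exact_mod_cast (2*j).factorial_pos
  unfold mc
  rw [h1, Nat.factorial_succ, Nat.factorial_succ, Nat.factorial_succ]
  push_cast
  field_simp
  ring

lemma mc_pos (j : ℕ) : 0 < mc j := by
  apply div_pos
  · exact mul_pos (Real.sqrt_pos.2 Real.pi_pos) (by exact_mod_cast (2*j).factorial_pos)
  · exact mul_pos (by positivity) (by exact_mod_cast j.factorial_pos)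

lemma Mf_eq (j : ℕ) : ∀ s : ℝ, 0 < s → Mf j s = mc j * s ^ (-((j : ℝ) + 1 / 2)) := by
  induction j with
  | zero =>
    intro s hs
    have h0 : Mf 0 s = ∫ ξ : ℝ, Real.exp (-s * ξ ^ 2) := by
      unfold Mf; congr 1; funext ξ; ring
    rw [h0, integral_gaussian, Real.sqrt_div Real.pi_pos.le]
    have h2 : Real.sqrt s = s ^ (1 / 2 : ℝ) := Real.sqrt_eq_rpow s
    have h3 : (-((0 : ℕ) : ℝ) - 1 / 2 : ℝ) = -(1/2 : ℝ) := by push_cast; ring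
    have hs' : (Real.sqrt s) ≠ 0 := by positivity
    rw [div_eq_mul_inv, h2, ← Real.rpow_neg hs.le]
    unfold mc
    norm_num
  | succ j ih =>
    intro s hs
    have hM := hasDerivAt_Mf j hs
    have hev : (fun u : ℝ => mc j * u ^ (-((j : ℝ) + 1 / 2))) =ᶠ[nhds s] Mf j :=
      eventuallyEq_of_mem (Ioi_mem_nhds hs) (fun u hu => (ih u hu).symm)
    have h1 : HasDerivAt (fun u : ℝ => mc j * u ^ (-((j : ℝ) + 1 / 2))) (-(Mf (j + 1) s)) s :=
      hM.congr_of_eventuallyEq hev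
    have h2 : HasDerivAt (fun u : ℝ => mc j * u ^ (-((j : ℝ) + 1 / 2)))
        (mc j * ((-((j : ℝ) + 1 / 2)) * s ^ ((-((j : ℝ) + 1 / 2)) - 1))) s :=
      (Real.hasDerivAt_rpow_const (Or.inl hs.ne')).const_mul _
    have hu := h1.unique h2
    have he : (-((j : ℝ) + 1 / 2)) - 1 = -(((j + 1 : ℕ) : ℝ) + 1 / 2) := by push_cast; ring
    rw [mc_succ, ← he]
    linear_combination -hu

lemma abs_Kf_le (w : ℝ → ℝ) (hw : Continuous w) (hwb : ∀ ξ, |w ξ| ≤ 1) (j : ℕ) {s : ℝ}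
    (hs : 0 < s) : |Kf w j s| ≤ mc j * s ^ (-((j : ℝ) + 1 / 2)) := by
  rw [← Mf_eq j s hs]
  have h1 : |Kf w j s| ≤ ∫ ξ : ℝ, ‖(ξ ^ 2) ^ j * w ξ * Real.exp (-s * ξ ^ 2)‖ := by
    rw [Kf, ← Real.norm_eq_abs]
    exact norm_integral_le_integral_norm _
  refine h1.trans (integral_mono ((integrable_Kf w hw hwb j hs).norm) (integrable_sq_pow_gauss j hs) ?_)
  intro ξ
  have h2 : 0 ≤ (ξ ^ 2) ^ j := pow_nonneg (sq_nonneg _) _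
  dsimp only
  rw [Real.norm_eq_abs, abs_mul, abs_mul, abs_of_nonneg h2, abs_of_nonneg (Real.exp_pos _).le]
  calc (ξ ^ 2) ^ j * |w ξ| * Real.exp (-s * ξ ^ 2)
      ≤ (ξ ^ 2) ^ j * 1 * Real.exp (-s * ξ ^ 2) := by gcongr; exact hwb ξ
    _ = (ξ ^ 2) ^ j * Real.exp (-s * ξ ^ 2) := by ring

/-! ### the Fourier identity -/

lemma Kf_cos_zero (x : ℝ) {s : ℝ} (hs : 0 < s) :
    Kf (fun ξ => Real.cos (x * ξ)) 0 s = Real.sqrt (π / s) * Real.exp (-(x ^ 2 / (4 * s))) := by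
  have hsre : 0 < ((s : ℂ)).re := by simpa using hs
  have h := fourierIntegral_gaussian hsre (x : ℂ)
  have hint : Integrable fun ξ : ℝ =>
      Complex.exp (Complex.I * x * ξ) * Complex.exp (-(s : ℂ) * ξ ^ 2) := by
    refine (integrable_cexp_quadratic hsre (Complex.I * x) 0).congr
      (Eventually.of_forall fun ξ => ?_)
    dsimp only
    rw [← Complex.exp_add]
    congr 1
    ring
  -- take real parts of h
  have hLHS : (∫ ξ : ℝ, Complex.exp (Complex.I * x * ξ) * Complex.exp (-(s : ℂ) * ξ ^ 2)).re
      = Kf (fun ξ => Real.cos (x * ξ)) 0 s := by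
    rw [← RCLike.re_to_complex, ← integral_re hint]
    unfold Kf
    congr 1
    funext ξ
    rw [RCLike.re_to_complex]
    rw [← Complex.exp_add, Complex.exp_re]
    have hre : (Complex.I * x * ξ + -(s : ℂ) * ξ ^ 2).re = -s * ξ ^ 2 := by
      simp [← Complex.ofReal_pow]
    have him : (Complex.I * x * ξ + -(s : ℂ) * ξ ^ 2).im = x * ξ := by
      simp [← Complex.ofReal_pow]
    rw [hre, him]
    ring
  have hRHS : (((π : ℂ) / s) ^ (1 / 2 : ℂ) * Complex.exp (-(x : ℂ) ^ 2 / (4 * s))).re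
      = Real.sqrt (π / s) * Real.exp (-(x ^ 2 / (4 * s))) := by
    have h1 : ((π : ℂ) / s) = ((π / s : ℝ) : ℂ) := by push_cast; ring
    have h2 : ((1 : ℂ) / 2) = ((1 / 2 : ℝ) : ℂ) := by push_cast; ring
    have h3 : (-(x : ℂ) ^ 2 / (4 * s)) = ((-(x ^ 2 / (4 * s)) : ℝ) : ℂ) := by push_cast; ring
    rw [h1, h2, h3, ← Complex.ofReal_cpow (by positivity), ← Complex.ofReal_exp,
      ← Complex.ofReal_mul, Complex.ofReal_re, ← Real.sqrt_eq_rpow]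
  rw [← hLHS, h, hRHS]


lemma sqrt_four_pi : Real.sqrt (4 * π) = 2 * Real.sqrt π := by
  rw [show (4 : ℝ) * π = (2 * Real.sqrt π) ^ 2 by
    rw [mul_pow, Real.sq_sqrt Real.pi_pos.le]; ring]
  exact Real.sqrt_sq (by positivity)

lemma gd_eq {d x t : ℝ} (hs : 0 < t + d) :
    gd d x t = (2 * π)⁻¹ * Kf (fun ξ => Real.cos (x * ξ)) 0 (t + d) := by
  rw [Kf_cos_zero x hs]
  unfold gd
  have h1 : Real.sqrt (4 * π * (t + d)) = 2 * Real.sqrt π * Real.sqrt (t + d) := by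
    rw [mul_assoc, ← sqrt_four_pi, ← Real.sqrt_mul (by positivity), ← mul_assoc]
  have h2 : Real.sqrt (π / (t + d)) = Real.sqrt π / Real.sqrt (t + d) :=
    Real.sqrt_div Real.pi_pos.le _
  rw [h1, h2]
  have hπ : Real.sqrt π ≠ 0 := by positivity
  have hst : Real.sqrt (t + d) ≠ 0 := by positivity
  have hππ : Real.sqrt π * Real.sqrt π = π := Real.mul_self_sqrt Real.pi_pos.le
  field_simp
  ring_nf
  rw [Real.sq_sqrt Real.pi_pos.le]

/-! ### the `G` family : derivatives of `gd` -/

def Gf (d x : ℝ) (j : ℕ) (t : ℝ) : ℝ :=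
  (2 * π)⁻¹ * ((-1 : ℝ) ^ j * Kf (fun ξ => Real.cos (x * ξ)) j (t + d))

lemma Gf_zero {d x t : ℝ} (hs : 0 < t + d) : gd d x t = Gf d x 0 t := by
  rw [gd_eq hs, Gf]; ring

lemma hasDerivAt_Gf (d x : ℝ) (j : ℕ) {t : ℝ} (ht : 0 < t + d) :
    HasDerivAt (Gf d x j) (Gf d x (j + 1) t) t := by
  have hK := hasDerivAt_Kf (fun ξ => Real.cos (x * ξ)) (by fun_prop)
    (fun ξ => Real.abs_cos_le_one _) j ht
  have h2 : HasDerivAt (fun u : ℝ => Kf (fun ξ => Real.cos (x * ξ)) j (u + d))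
      (-(Kf (fun ξ => Real.cos (x * ξ)) (j + 1) (t + d))) t := by
    have h3 := hK.comp t ((hasDerivAt_id t).add_const d)
    rw [mul_one] at h3
    exact h3
  have h4 := h2.const_mul ((2 * π)⁻¹ * (-1 : ℝ) ^ j)
  have h5 : HasDerivAt (Gf d x j)
      ((2 * π)⁻¹ * (-1 : ℝ) ^ j * -(Kf (fun ξ => Real.cos (x * ξ)) (j + 1) (t + d))) t := by
    apply h4.congr_of_eventuallyEq
    filter_upwards with u
    rw [Gf]; ring
  have h6 : (2 * π)⁻¹ * (-1 : ℝ) ^ j * -(Kf (fun ξ => Real.cos (x * ξ)) (j + 1) (t + d))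
      = Gf d x (j + 1) t := by
    rw [Gf, pow_succ]; ring
  rwa [h6] at h5

lemma abs_Gf_le (d x : ℝ) (j : ℕ) {t : ℝ} (hd : 0 < d) (ht : 0 < t) :
    |Gf d x j t| ≤ (2 * π)⁻¹ * mc j * t ^ (-((j : ℝ) + 1 / 2)) := by
  have hs : 0 < t + d := by linarith
  have h1 : |Gf d x j t| = (2 * π)⁻¹ * |Kf (fun ξ => Real.cos (x * ξ)) j (t + d)| := by
    rw [Gf, abs_mul, abs_mul, abs_pow, abs_neg, abs_one, one_pow, one_mul,
      abs_of_nonneg (by positivity : (0:ℝ) ≤ (2 * π)⁻¹)]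
  rw [h1, mul_assoc]
  gcongr _ * ?_
  calc |Kf (fun ξ => Real.cos (x * ξ)) j (t + d)| ≤ mc j * (t + d) ^ (-((j : ℝ) + 1 / 2)) :=
        abs_Kf_le _ (by fun_prop) (fun ξ => Real.abs_cos_le_one _) j hs
    _ ≤ mc j * t ^ (-((j : ℝ) + 1 / 2)) :=
        mul_le_mul_of_nonneg_left
          (Real.rpow_le_rpow_of_nonpos ht (by linarith) (neg_nonpos.mpr (by positivity)))
          (mc_pos j).le

/-! ### the `A` family : derivatives of `t ↦ (√(4πt))⁻¹` -/

def ac (k : ℕ) : ℝ :=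
  (-1 : ℝ) ^ k * (Real.sqrt (4 * π))⁻¹ * (2 * k).factorial / (4 ^ k * k.factorial)

lemma ac_succ (k : ℕ) : ac (k + 1) = ac k * (-(1 / 2) - k) := by
  have h1 : 2 * (k + 1) = (2 * k + 1) + 1 := by ring
  have hf1 : (0:ℝ) < (k.factorial : ℝ) := by exact_mod_cast k.factorial_pos
  unfold ac
  rw [h1, Nat.factorial_succ, Nat.factorial_succ, Nat.factorial_succ, pow_succ, pow_succ]
  push_cast
  field_simp
  ring

lemma abs_ac (k : ℕ) :
    |ac k| = (Real.sqrt (4 * π))⁻¹ * (2 * k).factorial / (4 ^ k * k.factorial) := by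
  unfold ac
  rw [abs_div, abs_mul, abs_mul, abs_pow, abs_neg, abs_one, one_pow, one_mul]
  rw [abs_of_nonneg (by positivity : (0:ℝ) ≤ (Real.sqrt (4 * π))⁻¹),
    abs_of_nonneg (by positivity : (0:ℝ) ≤ ((2 * k).factorial : ℝ)),
    abs_of_nonneg (by positivity : (0:ℝ) ≤ (4 ^ k * k.factorial : ℝ))]

def Af (k : ℕ) (t : ℝ) : ℝ := ac k * t ^ (-(1 / 2) - (k : ℝ))

lemma Af_zero {t : ℝ} (ht : 0 < t) : (Real.sqrt (4 * π * t))⁻¹ = Af 0 t := by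
  unfold Af ac
  rw [Real.sqrt_mul (by positivity) t, mul_inv]
  have h1 : (Real.sqrt t)⁻¹ = t ^ (-(1 / 2) - ((0:ℕ) : ℝ)) := by
    rw [Real.sqrt_eq_rpow, ← Real.rpow_neg ht.le]
    norm_num
  rw [h1]
  norm_num

lemma hasDerivAt_Af (k : ℕ) {t : ℝ} (ht : 0 < t) :
    HasDerivAt (Af k) (Af (k + 1) t) t := by
  have h := (Real.hasDerivAt_rpow_const (x := t) (p := -(1 / 2) - (k : ℝ))
    (Or.inl ht.ne')).const_mul (ac k)
  have he : Af (k + 1) t = ac k * ((-(1 / 2) - (k : ℝ)) * t ^ (-(1 / 2) - (k : ℝ) - 1)) := by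
    rw [Af, ac_succ]
    have : (-(1 / 2) - (k : ℝ)) - 1 = -(1 / 2) - ((k + 1 : ℕ) : ℝ) := by push_cast; ring
    rw [← this]
    ring
  rw [he]
  exact h

/-! ### iterated derivatives from a derivative family -/

lemma iteratedDeriv_eq_of_family (A : ℝ → ℝ) (f : ℕ → ℝ → ℝ)
    (h0 : ∀ s : ℝ, 0 < s → A s = f 0 s)
    (hf : ∀ (m : ℕ) (s : ℝ), 0 < s → HasDerivAt (f m) (f (m + 1) s) s) :
    ∀ (m : ℕ) (s : ℝ), 0 < s → iteratedDeriv m A s = f m s := by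
  intro m
  induction m with
  | zero => intro s hs; simpa [iteratedDeriv_zero] using h0 s hs
  | succ m ih =>
    intro s hs
    rw [iteratedDeriv_succ]
    have hev : iteratedDeriv m A =ᶠ[nhds s] f m :=
      eventuallyEq_of_mem (Ioi_mem_nhds hs) (fun u hu => ih u hu)
    rw [hev.deriv_eq, (hf m s hs).deriv]

/-! ### central binomial estimates -/

def cb (k : ℕ) : ℝ := (Nat.centralBinom k : ℝ) / 4 ^ k

lemma cb_nonneg (k : ℕ) : 0 ≤ cb k := by
  unfold cb; positivity

lemma cb_succ (k : ℕ) : cb (k + 1) = cb k * ((2 * k + 1) / (2 * k + 2)) := by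
  have h := Nat.succ_mul_centralBinom_succ k
  have h' : ((k:ℝ) + 1) * (Nat.centralBinom (k + 1) : ℝ)
      = 2 * (2 * k + 1) * (Nat.centralBinom k : ℝ) := by exact_mod_cast h
  unfold cb
  rw [pow_succ]
  have hk1 : ((k:ℝ) + 1) ≠ 0 := by positivity
  rw [div_mul_div_comm, div_eq_div_iff (by positivity) (by positivity)]
  linear_combination (2 * (4:ℝ) ^ k) * h'

lemma cb_le (k : ℕ) : cb k ≤ 1 / Real.sqrt (k + 1) := by
  induction k with
  | zero => simp [cb, Nat.centralBinom]
  | succ k ih =>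
    rw [cb_succ]
    have hk2 : (0:ℝ) < (k:ℝ) + 2 := by positivity
    have hk1 : (0:ℝ) < (k:ℝ) + 1 := by positivity
    have key : (2 * (k:ℝ) + 1) * Real.sqrt (k + 2) ≤ (2 * (k:ℝ) + 2) * Real.sqrt (k + 1) := by
      have h1 : ((2 * (k:ℝ) + 1) * Real.sqrt (k + 2)) ^ 2 ≤ ((2 * (k:ℝ) + 2) * Real.sqrt (k + 1)) ^ 2 := by
        rw [mul_pow, mul_pow, Real.sq_sqrt hk2.le, Real.sq_sqrt hk1.le]
        nlinarith [Nat.cast_nonneg (α := ℝ) k]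
      have h2 : 0 ≤ (2 * (k:ℝ) + 1) * Real.sqrt (k + 2) := by positivity
      have h3 : 0 ≤ (2 * (k:ℝ) + 2) * Real.sqrt (k + 1) := by positivity
      nlinarith [h1, h2, h3]
    have hs1 : 0 < Real.sqrt ((k:ℝ) + 1) := Real.sqrt_pos.2 hk1
    have hs2 : 0 < Real.sqrt ((k:ℝ) + 2) := Real.sqrt_pos.2 hk2
    have hrat : (0:ℝ) ≤ (2 * (k:ℝ) + 1) / (2 * (k:ℝ) + 2) := by positivity
    calc cb k * ((2 * (k:ℝ) + 1) / (2 * (k:ℝ) + 2))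
        ≤ (1 / Real.sqrt ((k:ℝ) + 1)) * ((2 * (k:ℝ) + 1) / (2 * (k:ℝ) + 2)) := by
          exact mul_le_mul_of_nonneg_right ih hrat
      _ ≤ 1 / Real.sqrt ((k:ℝ) + 2) := by
          rw [div_mul_div_comm, one_mul, div_le_div_iff₀ (by positivity) hs2]
          have : ((k:ℝ) + 1 + 1) = (k:ℝ) + 2 := by ring
          nlinarith [key]
      _ = 1 / Real.sqrt (((k + 1 : ℕ) : ℝ) + 1) := by push_cast; ring_nf

lemma sum_inv_sqrt (M : ℕ) :
    ∑ k ∈ Finset.range M, (1:ℝ) / Real.sqrt (k + 1) ≤ 2 * Real.sqrt M := by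
  induction M with
  | zero => simp
  | succ M ih =>
    rw [Finset.sum_range_succ]
    have hp : (0:ℝ) < Real.sqrt ((M:ℝ) + 1) := Real.sqrt_pos.2 (by positivity)
    have h1 : Real.sqrt (M:ℝ) * Real.sqrt ((M:ℝ) + 1) = Real.sqrt ((M:ℝ) * ((M:ℝ) + 1)) :=
      (Real.sqrt_mul (Nat.cast_nonneg M) _).symm
    have h2 : Real.sqrt ((M:ℝ) + 1) * Real.sqrt ((M:ℝ) + 1) = (M:ℝ) + 1 :=
      Real.mul_self_sqrt (by positivity)
    have key : Real.sqrt ((M:ℝ) * ((M:ℝ) + 1)) ≤ (M:ℝ) + 1 / 2 := by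
      have h3 := Real.sqrt_le_sqrt (show (M:ℝ) * ((M:ℝ) + 1) ≤ ((M:ℝ) + 1 / 2) ^ 2 by nlinarith)
      rwa [Real.sqrt_sq (by positivity)] at h3
    have h4 : (1:ℝ) / Real.sqrt ((M:ℝ) + 1) ≤ 2 * Real.sqrt ((M:ℝ) + 1) - 2 * Real.sqrt (M:ℝ) := by
      rw [div_le_iff₀ hp]
      nlinarith [h1, h2, key]
    have hcast : ((M + 1 : ℕ) : ℝ) = (M:ℝ) + 1 := by push_cast; ring
    rw [hcast]
    calc (∑ k ∈ Finset.range M, (1:ℝ) / Real.sqrt (k + 1)) + 1 / Real.sqrt ((M:ℝ) + 1)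
        ≤ 2 * Real.sqrt (M:ℝ) + (2 * Real.sqrt ((M:ℝ) + 1) - 2 * Real.sqrt (M:ℝ)) := by
          exact add_le_add ih h4
      _ = 2 * Real.sqrt ((M:ℝ) + 1) := by ring

lemma conv_sum_le (N : ℕ) :
    ∑ i ∈ Finset.range (N + 1), cb i * cb (N - i) ≤ 6 := by
  have hterm : ∀ i ∈ Finset.range (N + 1), cb i * cb (N - i) ≤
      Real.sqrt 2 / Real.sqrt ((N:ℝ) + 2) * (1 / Real.sqrt ((i:ℝ) + 1) + 1 / Real.sqrt (((N - i : ℕ):ℝ) + 1)) := by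
    intro i hi
    rw [Finset.mem_range] at hi
    have hiN : i ≤ N := Nat.lt_succ_iff.mp hi
    set m : ℕ := N - i with hm
    have him : i + m = N := Nat.add_sub_cancel' hiN
    have himR : (i:ℝ) + (m:ℝ) = (N:ℝ) := by exact_mod_cast congrArg (Nat.cast (R := ℝ)) him
    have hbig : ∀ a : ℕ, (N:ℝ) + 2 ≤ 2 * ((a:ℝ) + 1) →
        (1:ℝ) / Real.sqrt ((a:ℝ) + 1) ≤ Real.sqrt 2 / Real.sqrt ((N:ℝ) + 2) := by
      intro a ha
      have hs1 : (0:ℝ) < Real.sqrt ((a:ℝ) + 1) := Real.sqrt_pos.2 (by positivity)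
      have hs2 : (0:ℝ) < Real.sqrt ((N:ℝ) + 2) := Real.sqrt_pos.2 (by positivity)
      rw [div_le_div_iff₀ hs1 hs2, one_mul]
      calc Real.sqrt ((N:ℝ) + 2) ≤ Real.sqrt (2 * ((a:ℝ) + 1)) := Real.sqrt_le_sqrt ha
        _ = Real.sqrt 2 * Real.sqrt ((a:ℝ) + 1) := Real.sqrt_mul (by norm_num) _
    rcases le_total (i:ℝ) (m:ℝ) with hcase | hcase
    · have h1 : cb i * cb m ≤ (1 / Real.sqrt ((i:ℝ) + 1)) * (Real.sqrt 2 / Real.sqrt ((N:ℝ) + 2)) := by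
        apply mul_le_mul (cb_le i) ((cb_le m).trans (hbig m (by linarith))) (cb_nonneg m) (by positivity)
      refine h1.trans ?_
      have : (0:ℝ) ≤ Real.sqrt 2 / Real.sqrt ((N:ℝ) + 2) := by positivity
      have h2 : (0:ℝ) ≤ 1 / Real.sqrt (((m:ℕ):ℝ) + 1) := by positivity
      nlinarith [this, h2, mul_nonneg this h2]
    · have h1 : cb i * cb m ≤ (Real.sqrt 2 / Real.sqrt ((N:ℝ) + 2)) * (1 / Real.sqrt ((m:ℝ) + 1)) := by
        apply mul_le_mul ((cb_le i).trans (hbig i (by linarith))) (cb_le m) (cb_nonneg m) (by positivity)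
      refine h1.trans ?_
      have : (0:ℝ) ≤ Real.sqrt 2 / Real.sqrt ((N:ℝ) + 2) := by positivity
      have h2 : (0:ℝ) ≤ 1 / Real.sqrt (((i:ℕ):ℝ) + 1) := by positivity
      nlinarith [this, h2, mul_nonneg this h2]
  calc ∑ i ∈ Finset.range (N + 1), cb i * cb (N - i)
      ≤ ∑ i ∈ Finset.range (N + 1), Real.sqrt 2 / Real.sqrt ((N:ℝ) + 2) *
          (1 / Real.sqrt ((i:ℝ) + 1) + 1 / Real.sqrt (((N - i : ℕ):ℝ) + 1)) :=
        Finset.sum_le_sum hterm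
    _ = Real.sqrt 2 / Real.sqrt ((N:ℝ) + 2) *
          ((∑ i ∈ Finset.range (N + 1), 1 / Real.sqrt ((i:ℝ) + 1)) +
           (∑ i ∈ Finset.range (N + 1), 1 / Real.sqrt (((N - i : ℕ):ℝ) + 1))) := by
        rw [← Finset.sum_add_distrib, Finset.mul_sum]
    _ ≤ 6 := by
        have hrev : (∑ i ∈ Finset.range (N + 1), (1:ℝ) / Real.sqrt (((N - i : ℕ):ℝ) + 1))
            = ∑ i ∈ Finset.range (N + 1), (1:ℝ) / Real.sqrt ((i:ℝ) + 1) := by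
          rw [← Finset.sum_range_reflect]
          apply Finset.sum_congr rfl
          intro i hi
          rw [Finset.mem_range] at hi
          congr 3
          norm_cast
          omega
        rw [hrev]
        have hsum : (∑ i ∈ Finset.range (N + 1), (1:ℝ) / Real.sqrt ((i:ℝ) + 1))
            ≤ 2 * Real.sqrt ((N:ℝ) + 1) := by
          simpa using sum_inv_sqrt (N + 1)
        have hs2 : (0:ℝ) < Real.sqrt ((N:ℝ) + 2) := Real.sqrt_pos.2 (by positivity)
        have hmono : Real.sqrt ((N:ℝ) + 1) ≤ Real.sqrt ((N:ℝ) + 2) := Real.sqrt_le_sqrt (by linarith)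
        have hsqrt2 : Real.sqrt 2 ≤ 3 / 2 := by
          have := Real.sqrt_le_sqrt (show (2:ℝ) ≤ (3/2)^2 by norm_num)
          rwa [Real.sqrt_sq (by norm_num)] at this
        have hS : (0:ℝ) ≤ ∑ i ∈ Finset.range (N + 1), (1:ℝ) / Real.sqrt ((i:ℝ) + 1) := by
          apply Finset.sum_nonneg; intro i _; positivity
        calc Real.sqrt 2 / Real.sqrt ((N:ℝ) + 2) *
              ((∑ i ∈ Finset.range (N + 1), 1 / Real.sqrt ((i:ℝ) + 1)) +
               (∑ i ∈ Finset.range (N + 1), 1 / Real.sqrt ((i:ℝ) + 1)))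
            ≤ Real.sqrt 2 / Real.sqrt ((N:ℝ) + 2) * (4 * Real.sqrt ((N:ℝ) + 1)) := by
              apply mul_le_mul_of_nonneg_left (by linarith) (by positivity)
          _ ≤ Real.sqrt 2 / Real.sqrt ((N:ℝ) + 2) * (4 * Real.sqrt ((N:ℝ) + 2)) := by
              apply mul_le_mul_of_nonneg_left (by linarith) (by positivity)
          _ = 4 * Real.sqrt 2 := by field_simp
          _ ≤ 6 := by linarith

/-! ### smoothness -/

lemma contDiffAt_B {s : ℝ} (hs : 0 < s) :
    ContDiffAt ℝ (⊤ : ℕ∞) (fun u : ℝ => (Real.sqrt (4 * π * u))⁻¹) s := by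
  have h0 : ContDiffAt ℝ (⊤ : ℕ∞) (fun v : ℝ => v ^ (-(1/2) : ℝ)) (4 * π * s) :=
    Real.contDiffAt_rpow_const_of_ne (by have := Real.pi_pos; nlinarith : (0:ℝ) < 4*π*s).ne'
  have hlin : ContDiffAt ℝ (⊤ : ℕ∞) (fun u : ℝ => 4 * π * u) s := by fun_prop
  have h1 := h0.comp s hlin
  apply h1.congr_of_eventuallyEq
  filter_upwards [Ioi_mem_nhds hs] with u hu
  have hu0 : (0:ℝ) < u := hu
  have hu' : (0:ℝ) < 4 * π * u := by nlinarith [Real.pi_pos]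
  simp only [Function.comp]
  rw [Real.sqrt_eq_rpow, ← Real.rpow_neg hu'.le]

lemma contDiffOn_A : ContDiffOn ℝ (⊤ : ℕ∞) (fun u : ℝ => (Real.sqrt (4 * π * u))⁻¹) (Ioi 0) :=
  fun s hs => (contDiffAt_B (mem_Ioi.1 hs)).contDiffWithinAt

lemma contDiffOn_gd (d x : ℝ) (hd : 0 < d) :
    ContDiffOn ℝ (⊤ : ℕ∞) (gd d x) (Ioi 0) := by
  intro t ht
  have ht' : 0 < t + d := by have := mem_Ioi.1 ht; linarith
  apply ContDiffAt.contDiffWithinAt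
  have hlin : ContDiffAt ℝ (⊤ : ℕ∞) (fun u : ℝ => u + d) t := by fun_prop
  have h1 := (contDiffAt_B ht').comp t hlin
  have h2 : ContDiffAt ℝ (⊤ : ℕ∞) (fun u : ℝ => Real.exp (-(x ^ 2 / (4 * (u + d))))) t := by
    apply (Real.contDiff_exp.contDiffAt).comp
    apply ContDiffAt.neg
    exact ContDiffAt.div contDiffAt_const (by fun_prop) (show (4*(t+d):ℝ) ≠ 0 by positivity)
  have h3 := h1.mul h2
  apply h3.congr_of_eventuallyEq
  filter_upwards with u
  simp only [Function.comp, gd]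

end Stmt15Aux

open Stmt15Aux Set Filter

/-- Bound on the `(2n)`-th time derivative of the integrand `F_d`
(equation (3.30) of the paper). -/
theorem stmt15 :
    ∃ C > 0, ∀ d : ℝ, 0 < d → ∀ n : ℕ, 1 ≤ n → ∀ x : ℝ, ∀ t : ℝ, 0 < t →
      |iteratedDeriv (2 * n) (fun t' => Fd d x t') t| ≤
        C * (n:ℝ) ^ ((1:ℝ)/4) * ((2 * n).factorial : ℝ) * (t ^ (2 * n + 1))⁻¹ := by
  refine ⟨1, one_pos, ?_⟩
  intro d hd n hn x t ht
  set N := 2 * n with hN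
  set A : ℝ → ℝ := fun u => (Real.sqrt (4 * π * u))⁻¹ with hA
  -- iterated derivatives of the two factors
  have hAiter : ∀ (k : ℕ) (s : ℝ), 0 < s → iteratedDeriv k A s = Af k s :=
    iteratedDeriv_eq_of_family A Af (fun s hs => Af_zero hs) (fun k s hs => hasDerivAt_Af k hs)
  have hGiter : ∀ (k : ℕ) (s : ℝ), 0 < s → iteratedDeriv k (gd d x) s = Gf d x k s :=
    iteratedDeriv_eq_of_family (gd d x) (Gf d x)
      (fun s hs => Gf_zero (by linarith))
      (fun k s hs => hasDerivAt_Gf d x k (by linarith))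
  have htIoi : t ∈ Ioi (0:ℝ) := mem_Ioi.2 ht
  -- Leibniz
  have key := norm_iteratedFDerivWithin_mul_le (𝕜 := ℝ) (n := N)
    contDiffOn_A (contDiffOn_gd d x hd) (uniqueDiffOn_Ioi 0) htIoi
    (by exact_mod_cast le_top)
  -- convert LHS
  have eL : |iteratedDeriv N (fun t' => Fd d x t') t|
      = ‖iteratedFDerivWithin ℝ N (fun y => A y * gd d x y) (Ioi 0) t‖ := by
    rw [iteratedFDerivWithin_of_isOpen (f := fun y => A y * gd d x y) N isOpen_Ioi htIoi,
      norm_iteratedFDeriv_eq_norm_iteratedDeriv, Real.norm_eq_abs]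
    rfl
  have ew : ∀ (k : ℕ) (f : ℝ → ℝ), ‖iteratedFDerivWithin ℝ k f (Ioi 0) t‖
      = |iteratedDeriv k f t| := by
    intro k f
    rw [iteratedFDerivWithin_of_isOpen (f := f) k isOpen_Ioi htIoi,
      norm_iteratedFDeriv_eq_norm_iteratedDeriv, Real.norm_eq_abs]
  rw [eL]
  -- bound each term of the Leibniz sum
  have hfact : ∀ k : ℕ, ((2 * k).factorial : ℝ)
      = (Nat.centralBinom k : ℝ) * k.factorial * k.factorial := by
    intro k
    have h1 : (2 * k).choose k * k.factorial * (2 * k - k).factorial = (2 * k).factorial :=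
      Nat.choose_mul_factorial_mul_factorial (by omega)
    have h2 : 2 * k - k = k := by omega
    rw [h2] at h1
    rw [Nat.centralBinom]
    exact_mod_cast h1.symm
  have hterm : ∀ i ∈ Finset.range (N + 1),
      (N.choose i : ℝ) * ‖iteratedFDerivWithin ℝ i A (Ioi 0) t‖ *
        ‖iteratedFDerivWithin ℝ (N - i) (gd d x) (Ioi 0) t‖
      ≤ (4 * π)⁻¹ * (N.factorial : ℝ) * (cb i * cb (N - i)) * (t ^ (N + 1))⁻¹ := by
    intro i hi
    rw [Finset.mem_range] at hi
    have hiN : i ≤ N := Nat.lt_succ_iff.mp hi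
    set j : ℕ := N - i with hj
    have hij : i + j = N := Nat.add_sub_cancel' hiN
    rw [ew i A, ew j (gd d x), hAiter i t ht, hGiter j t ht]
    -- |Af i t|
    have hAbs : |Af i t| = (Real.sqrt (4 * π))⁻¹ * (cb i * i.factorial) * t ^ (-(1/2) - (i:ℝ)) := by
      rw [Af, abs_mul, abs_ac, abs_of_nonneg (Real.rpow_nonneg ht.le _), hfact, cb]
      have hfi : ((i.factorial : ℝ)) ≠ 0 := by positivity
      field_simp
    have hGbs : |Gf d x j t| ≤ (2 * π)⁻¹ * (Real.sqrt π * (cb j * j.factorial)) *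
        t ^ (-((j : ℝ) + 1 / 2)) := by
      have h := abs_Gf_le d x j hd ht
      have hmc : mc j = Real.sqrt π * (cb j * j.factorial) := by
        rw [mc, hfact, cb]
        have hfj : ((j.factorial : ℝ)) ≠ 0 := by positivity
        field_simp
      rw [hmc] at h
      exact h.trans_eq (by ring)
    have hchoose : (N.choose i : ℝ) * i.factorial * j.factorial = N.factorial := by
      exact_mod_cast Nat.choose_mul_factorial_mul_factorial hiN
    have hrpow : t ^ (-(1/2) - (i:ℝ)) * t ^ (-((j : ℝ) + 1 / 2)) = (t ^ (N + 1))⁻¹ := by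
      rw [← Real.rpow_add ht]
      have : (-(1/2) - (i:ℝ)) + (-((j : ℝ) + 1 / 2)) = -(((N + 1 : ℕ) : ℝ)) := by
        have : (i:ℝ) + (j:ℝ) = (N:ℝ) := by exact_mod_cast congrArg (Nat.cast (R := ℝ)) hij
        push_cast
        linarith
      rw [this, Real.rpow_neg ht.le, Real.rpow_natCast]
    have hconst : (Real.sqrt (4 * π))⁻¹ * ((2 * π)⁻¹ * Real.sqrt π) = (4 * π)⁻¹ := by
      rw [sqrt_four_pi]
      have hππ : Real.sqrt π * Real.sqrt π = π := Real.mul_self_sqrt Real.pi_pos.le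
      have hπ : Real.sqrt π ≠ 0 := by positivity
      have : π ≠ 0 := Real.pi_ne_zero
      field_simp
      linarith [hππ]
    calc (N.choose i : ℝ) * |Af i t| * |Gf d x j t|
        ≤ (N.choose i : ℝ) * ((Real.sqrt (4 * π))⁻¹ * (cb i * i.factorial) * t ^ (-(1/2) - (i:ℝ)))
            * ((2 * π)⁻¹ * (Real.sqrt π * (cb j * j.factorial)) * t ^ (-((j : ℝ) + 1 / 2))) := by
          rw [hAbs]
          apply mul_le_mul_of_nonneg_left hGbs
          have : (0:ℝ) ≤ (Real.sqrt (4 * π))⁻¹ * (cb i * i.factorial) := by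
            have := cb_nonneg i; positivity
          positivity
      _ = (4 * π)⁻¹ * ((N.choose i : ℝ) * i.factorial * j.factorial) * (cb i * cb j) *
            (t ^ (-(1/2) - (i:ℝ)) * t ^ (-((j : ℝ) + 1 / 2))) := by
          rw [← hconst]; ring
      _ = (4 * π)⁻¹ * (N.factorial : ℝ) * (cb i * cb j) * (t ^ (N + 1))⁻¹ := by
          rw [hchoose, hrpow]
  -- sum up
  have hsum : ∑ i ∈ Finset.range (N + 1),
      (N.choose i : ℝ) * ‖iteratedFDerivWithin ℝ i A (Ioi 0) t‖ *
        ‖iteratedFDerivWithin ℝ (N - i) (gd d x) (Ioi 0) t‖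
      ≤ (4 * π)⁻¹ * (N.factorial : ℝ) * 6 * (t ^ (N + 1))⁻¹ := by
    calc ∑ i ∈ Finset.range (N + 1),
        (N.choose i : ℝ) * ‖iteratedFDerivWithin ℝ i A (Ioi 0) t‖ *
          ‖iteratedFDerivWithin ℝ (N - i) (gd d x) (Ioi 0) t‖
        ≤ ∑ i ∈ Finset.range (N + 1),
            (4 * π)⁻¹ * (N.factorial : ℝ) * (cb i * cb (N - i)) * (t ^ (N + 1))⁻¹ :=
          Finset.sum_le_sum hterm
      _ = (4 * π)⁻¹ * (N.factorial : ℝ) * (∑ i ∈ Finset.range (N + 1), cb i * cb (N - i))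
            * (t ^ (N + 1))⁻¹ := by
          rw [Finset.mul_sum, Finset.sum_mul]
      _ ≤ (4 * π)⁻¹ * (N.factorial : ℝ) * 6 * (t ^ (N + 1))⁻¹ := by
          apply mul_le_mul_of_nonneg_right ?_ (by positivity)
          apply mul_le_mul_of_nonneg_left (conv_sum_le N) (by positivity)
  refine (key.trans hsum).trans ?_
  -- final constant comparison
  have h1 : (1:ℝ) ≤ (n:ℝ) ^ ((1:ℝ)/4) :=
    Real.one_le_rpow (by exact_mod_cast hn) (by norm_num)
  have h2 : (4 * π)⁻¹ * 6 ≤ 1 := by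
    have := Real.pi_gt_three
    rw [inv_mul_eq_div, div_le_one (by linarith)]
    linarith
  calc (4 * π)⁻¹ * (N.factorial : ℝ) * 6 * (t ^ (N + 1))⁻¹
      = ((4 * π)⁻¹ * 6) * ((N.factorial : ℝ) * (t ^ (N + 1))⁻¹) := by ring
    _ ≤ 1 * ((N.factorial : ℝ) * (t ^ (N + 1))⁻¹) := by
        apply mul_le_mul_of_nonneg_right h2 (by positivity)
    _ ≤ (n:ℝ) ^ ((1:ℝ)/4) * ((N.factorial : ℝ) * (t ^ (N + 1))⁻¹) := by
        apply mul_le_mul_of_nonneg_right h1 (by positivity)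
    _ = 1 * (n:ℝ) ^ ((1:ℝ)/4) * (N.factorial : ℝ) * (t ^ (N + 1))⁻¹ := by ring
end
end
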